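/- Consider the biased assimilation model with $b_i \ge 1$ for all $i$ on a strongly connected graph. If $x_i(0) \le 1/2$ for all $i$ and $x_j(0) < 1/2$ for at least one $j$, then $x_i(k) \to 0$ as $k \to \infty$ for every $i$. -/

import Mathlib

open Finset Filter Topology

/-- Weighted sum of neighbors' opinions: `s_i = ∑_{j ∈ N_i} w_{ij} x_j`. -/
noncomputable def wsum {N : ℕ} (w : Fin N → Fin N → ℝ) (Nbr : Fin N → Finset (Fin N))
    (x : Fin N → ℝ) (i : Fin N) : ℝ :=
  ∑ j ∈ Nbr i, w i j * x j

/-- Weighted degree `d_i = ∑_{j ∈ N_i} w_{ij}`. -/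
noncomputable def degw {N : ℕ} (w : Fin N → Fin N → ℝ) (Nbr : Fin N → Finset (Fin N))
    (i : Fin N) : ℝ :=
  ∑ j ∈ Nbr i, w i j

/-- Biased assimilation update map (componentwise). Powers are real powers. -/
noncomputable def F {N : ℕ} (w : Fin N → Fin N → ℝ) (Nbr : Fin N → Finset (Fin N))
    (b : Fin N → ℝ) (x : Fin N → ℝ) (i : Fin N) : ℝ :=
  (w i i * x i + x i ^ b i * wsum w Nbr x i) /
    (w i i + x i ^ b i * wsum w Nbr x i + (1 - x i) ^ b i * (degw w Nbr i - wsum w Nbr x i))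

/-- The directed influence graph (edge `j → i` iff `j ∈ Nbr i`) is strongly connected. -/
def StronglyConnected {N : ℕ} (Nbr : Fin N → Finset (Fin N)) : Prop :=
  ∀ i j : Fin N, Relation.TransGen (fun a c => a ∈ Nbr c) i j

/-- Lyapunov stability of a fixed point of the discrete-time system `x⁺ = G x`. -/
def LyapStable {E : Type*} [NormedAddCommGroup E] (G : E → E) (q : E) : Prop :=
  ∀ ε > 0, ∃ δ > 0, ∀ x, ‖x - q‖ < δ → ∀ k : ℕ, ‖G^[k] x - q‖ < ε

/-- Local exponential stability of a fixed point of `x⁺ = G x`. -/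
def LocExpStable {E : Type*} [NormedAddCommGroup E] (G : E → E) (q : E) : Prop :=
  ∃ δ > 0, ∃ C > 0, ∃ r, 0 ≤ r ∧ r < 1 ∧
    ∀ x, ‖x - q‖ ≤ δ → ∀ k : ℕ, ‖G^[k] x - q‖ ≤ C * r ^ k * ‖x - q‖

/-- Spectral radius of a real square matrix: supremum of moduli of its complex eigenvalues. -/
noncomputable def specRad {n : ℕ} (M : Matrix (Fin n) (Fin n) ℝ) : ℝ :=
  sSup {r : ℝ | ∃ μ : ℂ, (M.map (fun a => (a : ℂ))).charpoly.IsRoot μ ∧ r = ‖μ‖}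

lemma ba_s_nonneg {N : ℕ} (w : Fin N → Fin N → ℝ) (Nbr : Fin N → Finset (Fin N))
    (i : Fin N) (hw : ∀ j ∈ Nbr i, 0 < w i j) (x : Fin N → ℝ)
    (hx : ∀ j, 0 ≤ x j ∧ x j ≤ 1/2) : 0 ≤ wsum w Nbr x i :=
  Finset.sum_nonneg fun j hj => mul_nonneg (hw j hj).le (hx j).1

lemma ba_s_le {N : ℕ} (w : Fin N → Fin N → ℝ) (Nbr : Fin N → Finset (Fin N))
    (i : Fin N) (hw : ∀ j ∈ Nbr i, 0 < w i j) (x : Fin N → ℝ)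
    (hx : ∀ j, 0 ≤ x j ∧ x j ≤ 1/2) : 2 * wsum w Nbr x i ≤ degw w Nbr i := by
  have h1 : wsum w Nbr x i ≤ ∑ j ∈ Nbr i, w i j * (1/2) :=
    Finset.sum_le_sum fun j hj => mul_le_mul_of_nonneg_left (hx j).2 (hw j hj).le
  have h2 : ∑ j ∈ Nbr i, w i j * (1/2) = degw w Nbr i * (1/2) := by
    rw [degw, Finset.sum_mul]
  linarith

lemma ba_d_pos {N : ℕ} (w : Fin N → Fin N → ℝ) (Nbr : Fin N → Finset (Fin N))
    (i : Fin N) (hne : (Nbr i).Nonempty) (hw : ∀ j ∈ Nbr i, 0 < w i j) :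
    0 < degw w Nbr i :=
  Finset.sum_pos (fun j hj => hw j hj) hne

lemma ba_den_pos {N : ℕ} (w : Fin N → Fin N → ℝ) (Nbr : Fin N → Finset (Fin N)) (b : Fin N → ℝ)
    (i : Fin N) (hne : (Nbr i).Nonempty) (hw : ∀ j ∈ Nbr i, 0 < w i j) (hwii : 0 ≤ w i i)
    (x : Fin N → ℝ) (hx : ∀ j, 0 ≤ x j ∧ x j ≤ 1/2) :
    0 < w i i + x i ^ b i * wsum w Nbr x i +
      (1 - x i) ^ b i * (degw w Nbr i - wsum w Nbr x i) := by
  have hs0 := ba_s_nonneg w Nbr i hw x hx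
  have hsd := ba_s_le w Nbr i hw x hx
  have hd0 := ba_d_pos w Nbr i hne hw
  have h1x : (0:ℝ) < 1 - x i := by linarith [(hx i).2]
  have h1xb : 0 < (1 - x i) ^ b i := Real.rpow_pos_of_pos h1x _
  have hA : 0 < (1 - x i) ^ b i * (degw w Nbr i - wsum w Nbr x i) :=
    mul_pos h1xb (by linarith)
  have hB : 0 ≤ x i ^ b i * wsum w Nbr x i :=
    mul_nonneg (Real.rpow_nonneg (hx i).1 _) hs0
  linarith

lemma ba_pow_key {N : ℕ} (b : Fin N → ℝ) (i : Fin N) (hb : 1 ≤ b i)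
    (t : ℝ) (ht0 : 0 ≤ t) (ht2 : t ≤ 1/2) :
    t ^ b i * (1 - t) ≤ t * (1 - t) ^ b i := by
  rcases eq_or_lt_of_le ht0 with h0 | h0
  · rw [← h0, Real.zero_rpow (by linarith), zero_mul, zero_mul]
  · have h1x : (0:ℝ) < 1 - t := by linarith
    have e1 : t ^ b i = t ^ (b i - 1) * t := by
      have h := Real.rpow_add h0 (b i - 1) 1
      rw [Real.rpow_one, sub_add_cancel] at h
      exact h
    have e2 : (1 - t) ^ b i = (1 - t) ^ (b i - 1) * (1 - t) := by
      have h := Real.rpow_add h1x (b i - 1) 1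
      rw [Real.rpow_one, sub_add_cancel] at h
      exact h
    have hmono : t ^ (b i - 1) ≤ (1 - t) ^ (b i - 1) :=
      Real.rpow_le_rpow h0.le (by linarith) (by linarith)
    rw [e1, e2]
    nlinarith [mul_nonneg (mul_nonneg (sub_nonneg.mpr hmono) h0.le) h1x.le]

lemma ba_bounds {N : ℕ} (w : Fin N → Fin N → ℝ) (Nbr : Fin N → Finset (Fin N)) (b : Fin N → ℝ)
    (i : Fin N) (hne : (Nbr i).Nonempty) (hw : ∀ j ∈ Nbr i, 0 < w i j) (hwii : 0 ≤ w i i)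
    (hb : 1 ≤ b i) (x : Fin N → ℝ) (hx : ∀ j, 0 ≤ x j ∧ x j ≤ 1/2) :
    0 ≤ F w Nbr b x i ∧ F w Nbr b x i ≤ x i := by
  have hs0 := ba_s_nonneg w Nbr i hw x hx
  have hsd := ba_s_le w Nbr i hw x hx
  have hd0 := ba_d_pos w Nbr i hne hw
  have hden := ba_den_pos w Nbr b i hne hw hwii x hx
  have hxi0 := (hx i).1
  have hxi2 := (hx i).2
  have hxb0 : 0 ≤ x i ^ b i := Real.rpow_nonneg hxi0 _
  have h1x : (0:ℝ) < 1 - x i := by linarith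
  have h1xb : 0 < (1 - x i) ^ b i := Real.rpow_pos_of_pos h1x _
  constructor
  · exact div_nonneg (add_nonneg (mul_nonneg hwii hxi0) (mul_nonneg hxb0 hs0)) hden.le
  · rw [F, div_le_iff₀ hden]
    have hAB := ba_pow_key b i hb (x i) hxi0 hxi2
    have hkey : x i ^ b i * (1 - x i) * wsum w Nbr x i ≤
        x i * (1 - x i) ^ b i * (degw w Nbr i - wsum w Nbr x i) :=
      calc x i ^ b i * (1 - x i) * wsum w Nbr x i
          ≤ x i * (1 - x i) ^ b i * wsum w Nbr x i :=
            mul_le_mul_of_nonneg_right hAB hs0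
        _ ≤ x i * (1 - x i) ^ b i * (degw w Nbr i - wsum w Nbr x i) :=
            mul_le_mul_of_nonneg_left (by linarith) (mul_nonneg hxi0 h1xb.le)
    nlinarith [hkey]

lemma ba_fixed {N : ℕ} (w : Fin N → Fin N → ℝ) (Nbr : Fin N → Finset (Fin N)) (b : Fin N → ℝ)
    (i : Fin N) (hne : (Nbr i).Nonempty) (hw : ∀ j ∈ Nbr i, 0 < w i j) (hwii : 0 ≤ w i i)
    (hb : 1 ≤ b i) (L : Fin N → ℝ) (hL : ∀ j, 0 ≤ L j ∧ L j ≤ 1/2)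
    (hfix : F w Nbr b L i = L i) (hpos : 0 < L i) : ∀ j ∈ Nbr i, L j = 1/2 := by
  have hs0 := ba_s_nonneg w Nbr i hw L hL
  have hsd := ba_s_le w Nbr i hw L hL
  have hd0 := ba_d_pos w Nbr i hne hw
  have hden := ba_den_pos w Nbr b i hne hw hwii L hL
  have h1x : (0:ℝ) < 1 - L i := by linarith [(hL i).2]
  -- the fixed point equation rearranged
  have heq : L i ^ b i * wsum w Nbr L i * (1 - L i) =
      L i * (1 - L i) ^ b i * (degw w Nbr i - wsum w Nbr L i) := by
    rw [F, div_eq_iff hden.ne'] at hfix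
    nlinarith [hfix]
  have e1 : L i ^ b i = L i ^ (b i - 1) * L i := by
    have h := Real.rpow_add hpos (b i - 1) 1
    rw [Real.rpow_one, sub_add_cancel] at h
    exact h
  have e2 : (1 - L i) ^ b i = (1 - L i) ^ (b i - 1) * (1 - L i) := by
    have h := Real.rpow_add h1x (b i - 1) 1
    rw [Real.rpow_one, sub_add_cancel] at h
    exact h
  set A := L i ^ (b i - 1) with hA
  set B := (1 - L i) ^ (b i - 1) with hB
  have hA0 : 0 < A := Real.rpow_pos_of_pos hpos _
  have hABle : A ≤ B := Real.rpow_le_rpow hpos.le (by linarith [(hL i).2]) (by linarith)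
  -- cancel L i * (1 - L i)
  have heq' : A * wsum w Nbr L i = B * (degw w Nbr i - wsum w Nbr L i) := by
    rw [e1, e2] at heq
    have hne0 : L i * (1 - L i) ≠ 0 := by positivity
    exact mul_left_cancel₀ hne0 (by linear_combination heq)
  -- deduce s = d/2
  have hs_eq : 2 * wsum w Nbr L i = degw w Nbr i := by
    have h1 : A * (degw w Nbr i - 2 * wsum w Nbr L i) ≤ 0 := by
      nlinarith [mul_le_mul_of_nonneg_right hABle (show 0 ≤ degw w Nbr i - wsum w Nbr L i by linarith)]
    nlinarith [hA0]
  -- each neighbor equals 1/2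
  have hsum0 : ∑ j ∈ Nbr i, w i j * (1/2 - L j) = 0 := by
    have : ∑ j ∈ Nbr i, w i j * (1/2 - L j)
        = (∑ j ∈ Nbr i, w i j) * (1/2) - wsum w Nbr L i := by
      rw [Finset.sum_mul, wsum, ← Finset.sum_sub_distrib]
      congr 1; ext j; ring
    rw [this]
    have : (∑ j ∈ Nbr i, w i j) = degw w Nbr i := rfl
    rw [this]; linarith
  intro j hj
  have hterm := (Finset.sum_eq_zero_iff_of_nonneg
    (fun j hj => mul_nonneg (hw j hj).le (by linarith [(hL j).2]))).mp hsum0 j hj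
  have := (hw j hj).ne'
  have : (1/2 : ℝ) - L j = 0 := by
    rcases mul_eq_zero.mp hterm with h | h
    · exact absurd h (hw j hj).ne'
    · exact h
  linarith

theorem stmt9 {N : ℕ} (w : Fin N → Fin N → ℝ) (Nbr : Fin N → Finset (Fin N)) (b : Fin N → ℝ)
    (hsc : StronglyConnected Nbr)
    (hw : ∀ i, ∀ j ∈ Nbr i, 0 < w i j) (hwii : ∀ i, 0 ≤ w i i) (hb : ∀ i, 1 ≤ b i)
    (x : ℕ → Fin N → ℝ) (hupd : ∀ k, x (k + 1) = F w Nbr b (x k))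
    (h0 : ∀ i, 0 ≤ x 0 i ∧ x 0 i ≤ 1/2) (hj : ∃ j, x 0 j < 1/2) :
    ∀ i, Tendsto (fun k => x k i) atTop (nhds 0) := by
  -- every node has a nonempty in-neighborhood
  have hne : ∀ i, (Nbr i).Nonempty := by
    intro i
    cases hsc i i with
    | single h => exact ⟨i, h⟩
    | tail _ h => exact ⟨_, h⟩
  -- invariant
  have hinv : ∀ k, ∀ j, 0 ≤ x k j ∧ x k j ≤ 1/2 := by
    intro k
    induction k with
    | zero => exact h0
    | succ k ih =>
      intro j
      rw [hupd k]
      obtain ⟨h1, h2⟩ := ba_bounds w Nbr b j (hne j) (hw j) (hwii j) (hb j) (x k) ih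
      exact ⟨h1, le_trans h2 (ih j).2⟩
  -- monotonicity
  have hmono : ∀ k j, x (k + 1) j ≤ x k j := by
    intro k j
    rw [hupd k]
    exact (ba_bounds w Nbr b j (hne j) (hw j) (hwii j) (hb j) (x k) (hinv k)).2
  have hanti : ∀ j, Antitone fun k => x k j := fun j =>
    antitone_nat_of_succ_le fun k => hmono k j
  have hbdd : ∀ j, BddBelow (Set.range fun k => x k j) := fun j =>
    ⟨0, fun t ⟨k, hk⟩ => hk ▸ (hinv k j).1⟩
  set L : Fin N → ℝ := fun j => ⨅ k, x k j with hLdef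
  have hLt : ∀ j, Tendsto (fun k => x k j) atTop (nhds (L j)) := fun j =>
    tendsto_atTop_ciInf (hanti j) (hbdd j)
  have hL : ∀ j, 0 ≤ L j ∧ L j ≤ 1/2 := by
    intro j
    constructor
    · exact le_ciInf fun k => (hinv k j).1
    · exact le_trans (ciInf_le (hbdd j) 0) (h0 j).2
  have hLle0 : ∀ j, L j ≤ x 0 j := fun j => ciInf_le (hbdd j) 0
  -- L is a fixed point
  have hxt : Tendsto x atTop (nhds L) := tendsto_pi_nhds.mpr hLt
  have hfix : ∀ j, F w Nbr b L j = L j := by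
    intro j
    have hden := ba_den_pos w Nbr b j (hne j) (hw j) (hwii j) L hL
    have hcont : ContinuousAt (fun y : Fin N → ℝ => F w Nbr b y j) L := by
      have hcy : ContinuousAt (fun y : Fin N → ℝ => y j) L := (continuous_apply j).continuousAt
      have hcs : ContinuousAt (fun y : Fin N → ℝ => wsum w Nbr y j) L := by
        apply Continuous.continuousAt
        exact continuous_finset_sum _ fun m _ => continuous_const.mul (continuous_apply m)
      have hb0 : (0:ℝ) ≤ b j := le_trans zero_le_one (hb j)
      have hcp1 : ContinuousAt (fun y : Fin N → ℝ => y j ^ b j) L :=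
        hcy.rpow_const (Or.inr hb0)
      have hcp2 : ContinuousAt (fun y : Fin N → ℝ => (1 - y j) ^ b j) L :=
        (continuous_const.sub (continuous_apply j)).continuousAt.rpow_const (Or.inr hb0)
      exact ((continuousAt_const.mul hcy).add (hcp1.mul hcs)).div
        ((continuousAt_const.add (hcp1.mul hcs)).add
          (hcp2.mul (continuousAt_const.sub hcs))) hden.ne'
    have h1 : Tendsto (fun k => x (k + 1) j) atTop (nhds (F w Nbr b L j)) := by
      have : Tendsto (fun k => F w Nbr b (x k) j) atTop (nhds (F w Nbr b L j)) :=
        hcont.tendsto.comp hxt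
      simpa only [hupd] using this
    have h2 : Tendsto (fun k => x (k + 1) j) atTop (nhds (L j)) :=
      (hLt j).comp (tendsto_add_atTop_nat 1)
    exact tendsto_nhds_unique h1 h2
  -- fixed-point analysis: positive entries force neighbors at 1/2
  have hhalf : ∀ i, 0 < L i → ∀ j ∈ Nbr i, L j = 1/2 := fun i hpos =>
    ba_fixed w Nbr b i (hne i) (hw i) (hwii i) (hb i) L hL (hfix i) hpos
  have key : ∀ a c, L a < 1/2 → a ∈ Nbr c → L c = 0 := by
    intro a c ha hac
    by_contra h
    have hc : 0 < L c := lt_of_le_of_ne (hL c).1 (Ne.symm h)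
    exact absurd (hhalf c hc a hac) (ne_of_lt ha)
  obtain ⟨j₀, hj₀⟩ := hj
  have hj₀L : L j₀ < 1/2 := lt_of_le_of_lt (hLle0 j₀) hj₀
  have hzero : ∀ i, L i = 0 := by
    intro i
    have h := hsc j₀ i
    induction h with
    | single h => exact key _ _ hj₀L h
    | tail _ h ih => exact key _ _ (by rw [ih]; norm_num) h
  intro i
  have := hLt i
  rwa [hzero i] at this
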